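/- Let f*(x) = (‖x‖² + 1)^a for a ∈ (0, 1/2), viewed as a function on ℝ. For any r > 0, if |x| ≥ r^{−1/(2−2a)}, then f*(x) + r x² is convex at x, i.e., its second derivative is nonnegative. Consequently f* satisfies: for every r > 0, f*(x) + r‖x‖² is convex for ‖x‖ ≥ R(r) with R(r) = r^{−1/(2−2a)}. -/

import Mathlib

open Real

lemma aux_d1 (a r : ℝ) (y : ℝ) :
    HasDerivAt (fun y : ℝ => (y ^ 2 + 1) ^ a + r * y ^ 2)
      (a * (y ^ 2 + 1) ^ (a - 1) * (2 * y) + r * (2 * y)) y := by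
  have h1 : HasDerivAt (fun y : ℝ => y ^ 2 + 1) (2 * y) y := by
    simpa using ((hasDerivAt_pow 2 y).add_const 1)
  have hne : y ^ 2 + 1 ≠ 0 := by positivity
  have h2 := h1.rpow_const (p := a) (Or.inl hne)
  have h3 : HasDerivAt (fun y : ℝ => r * y ^ 2) (r * (2 * y)) y := by
    simpa [mul_comm] using ((hasDerivAt_pow 2 y).const_mul r)
  have := h2.add h3
  refine this.congr_deriv ?_
  ring

lemma aux_d2 (a r : ℝ) (x : ℝ) (hx : x ^ 2 + 1 ≠ 0) :
    HasDerivAt (fun y : ℝ => a * (y ^ 2 + 1) ^ (a - 1) * (2 * y) + r * (2 * y))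
      (a * ((a - 1) * (x ^ 2 + 1) ^ (a - 1 - 1) * (2 * x)) * (2 * x)
        + a * (x ^ 2 + 1) ^ (a - 1) * 2 + r * 2) x := by
  have h1 : HasDerivAt (fun y : ℝ => y ^ 2 + 1) (2 * x) x := by
    simpa using ((hasDerivAt_pow 2 x).add_const 1)
  have h2 := (h1.rpow_const (p := a - 1) (Or.inl hx)).const_mul a
  have h3 := hasDerivAt_id x
  have h4 : HasDerivAt (fun y : ℝ => 2 * y) (2 : ℝ) x := by
    simpa using h3.const_mul 2
  have h5 := (h2.mul h4)
  have h6 : HasDerivAt (fun y : ℝ => r * (2 * y)) (r * 2) x := by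
    simpa [mul_comm] using h4.const_mul r
  have := h5.add h6
  refine this.congr_deriv ?_
  ring

/-- **Sub-linear tail potentials are convex outside a ball after quadratic regularization.**
Let `f*(x) = (x² + 1)^a` for `a ∈ (0, 1/2)`.  For any `r > 0`, if `|x| ≥ r^{-1/(2-2a)}`
then `f*(x) + r x²` has nonnegative second derivative at `x`; i.e. `f* + r ‖·‖²` is convex
outside the ball of radius `R(r) = r^{-1/(2-2a)}`. -/
theorem stmt_10 (a : ℝ) (ha : 0 < a) (ha2 : a < 1 / 2) (r : ℝ) (hr : 0 < r)
    (x : ℝ) (hx : r ^ (-(1 / (2 - 2 * a))) ≤ |x|) :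
    0 ≤ deriv (deriv (fun y : ℝ => (y ^ 2 + 1) ^ a + r * y ^ 2)) x := by
  have hderiv1 : deriv (fun y : ℝ => (y ^ 2 + 1) ^ a + r * y ^ 2)
      = fun y : ℝ => a * (y ^ 2 + 1) ^ (a - 1) * (2 * y) + r * (2 * y) := by
    funext y
    exact (aux_d1 a r y).deriv
  have hxne : x ^ 2 + 1 ≠ 0 := by positivity
  have hd2 := (aux_d2 a r x hxne)
  rw [hderiv1, hd2.deriv]
  -- now pure inequality
  have hxpos : (0 : ℝ) < |x| := lt_of_lt_of_le (rpow_pos_of_pos hr _) hx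
  have hx2pos : (0 : ℝ) < x ^ 2 := by
    have := sq_abs x ▸ pow_pos hxpos 2
    simpa [sq_abs] using this
  have ht : (0 : ℝ) < x ^ 2 + 1 := by positivity
  -- key bound : x^2 * (x^2+1)^(a-2) ≤ r
  have key : x ^ 2 * (x ^ 2 + 1) ^ (a - 1 - 1) ≤ r := by
    have h1 : (x ^ 2 + 1) ^ (a - 1 - 1) ≤ (x ^ 2) ^ (a - 1 - 1) :=
      rpow_le_rpow_of_nonpos hx2pos (by linarith) (by linarith)
    have h2 : x ^ 2 * (x ^ 2) ^ (a - 1 - 1) = (x ^ 2) ^ (a - 1) := by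
      nth_rewrite 1 [← Real.rpow_one (x ^ 2)]
      rw [← Real.rpow_add hx2pos]
      ring_nf
    have h3 : (x ^ 2) ^ (a - 1) ≤ r := by
      have h4 : (x ^ 2) ^ (a - 1) = |x| ^ (2 * (a - 1)) := by
        rw [← sq_abs x, ← Real.rpow_natCast |x| 2, ← Real.rpow_mul (abs_nonneg x)]
        norm_num
      have h5 : |x| ^ (2 * (a - 1)) ≤ (r ^ (-(1 / (2 - 2 * a)))) ^ (2 * (a - 1)) :=
        rpow_le_rpow_of_nonpos (rpow_pos_of_pos hr _) hx (by linarith)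
      have h6 : (r ^ (-(1 / (2 - 2 * a)))) ^ (2 * (a - 1)) = r := by
        rw [← Real.rpow_mul hr.le]
        have h2a : (2 - 2 * a) ≠ 0 := by linarith
        have : -(1 / (2 - 2 * a)) * (2 * (a - 1)) = 1 := by
          have h1a : (1 - a) ≠ 0 := by linarith
          field_simp
          ring
        rw [this, Real.rpow_one]
      rw [h4]; rw [h6] at h5; exact h5
    calc x ^ 2 * (x ^ 2 + 1) ^ (a - 1 - 1) ≤ x ^ 2 * (x ^ 2) ^ (a - 1 - 1) := by
          exact mul_le_mul_of_nonneg_left h1 hx2pos.le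
      _ = (x ^ 2) ^ (a - 1) := h2
      _ ≤ r := h3
  have hA : (0 : ℝ) ≤ (x ^ 2 + 1) ^ (a - 1 - 1) := (rpow_pos_of_pos ht _).le
  have hB : (x ^ 2 + 1) ^ (a - 1) = (x ^ 2 + 1) * (x ^ 2 + 1) ^ (a - 1 - 1) := by
    nth_rewrite 2 [← Real.rpow_one (x ^ 2 + 1)]
    rw [← Real.rpow_add ht]
    ring_nf
  rw [hB]
  nlinarith [mul_nonneg ha.le hA, mul_nonneg (mul_nonneg ha.le hA) hx2pos.le]
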